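/- Let F, P : ℝ → ℝ be continuous strictly increasing bijections with F(x) > P(x) for all x. Then there exists a continuous strictly increasing bijection r : ℝ → ℝ such that (r ∘ F)(x) − (r ∘ P)(x) = 2a for a fixed constant a > 0 and all x ∈ ℝ. -/

import Mathlib

open Filter Topology Function

lemma escape_up (h : ℝ → ℝ) (hc : Continuous h) (hlt : ∀ y, y < h y) (x y : ℝ) :
    ∃ k : ℕ, y < h^[k] x := by
  by_contra hcon
  push_neg at hcon
  set u : ℕ → ℝ := fun k => h^[k] x with hu
  have hmono : Monotone u := (strictMono_nat_of_lt_succ fun k => by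
    rw [hu]; simp only [Function.iterate_succ_apply']; exact hlt _).monotone
  have hbdd : BddAbove (Set.range u) := ⟨y, by rintro _ ⟨k, rfl⟩; exact hcon k⟩
  have h1 : Tendsto u atTop (𝓝 (⨆ k, u k)) := tendsto_atTop_ciSup hmono hbdd
  have h2 : Tendsto (fun k => u (k + 1)) atTop (𝓝 (⨆ k, u k)) :=
    h1.comp (tendsto_add_atTop_nat 1)
  have h3 : Tendsto (fun k => h (u k)) atTop (𝓝 (h (⨆ k, u k))) :=
    (hc.tendsto _).comp h1
  have heq : (fun k => h (u k)) = fun k => u (k + 1) := by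
    funext k; rw [hu]; simp [Function.iterate_succ_apply']
  rw [heq] at h3
  exact absurd (tendsto_nhds_unique h3 h2) (hlt _).ne'

lemma escape_down (h : ℝ → ℝ) (hc : Continuous h) (hlt : ∀ y, h y < y) (x y : ℝ) :
    ∃ k : ℕ, h^[k] x < y := by
  by_contra hcon
  push_neg at hcon
  set u : ℕ → ℝ := fun k => h^[k] x with hu
  have hmono : Antitone u := (strictAnti_nat_of_succ_lt fun k => by
    rw [hu]; simp only [Function.iterate_succ_apply']; exact hlt _).antitone
  have hbdd : BddBelow (Set.range u) := ⟨y, by rintro _ ⟨k, rfl⟩; exact hcon k⟩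
  have h1 : Tendsto u atTop (𝓝 (⨅ k, u k)) := tendsto_atTop_ciInf hmono hbdd
  have h2 : Tendsto (fun k => u (k + 1)) atTop (𝓝 (⨅ k, u k)) :=
    h1.comp (tendsto_add_atTop_nat 1)
  have h3 : Tendsto (fun k => h (u k)) atTop (𝓝 (h (⨅ k, u k))) :=
    (hc.tendsto _).comp h1
  have heq : (fun k => h (u k)) = fun k => u (k + 1) := by
    funext k; rw [hu]; simp [Function.iterate_succ_apply']
  rw [heq] at h3
  exact absurd (tendsto_nhds_unique h3 h2) (hlt _).ne


section
variable (g : ℝ ≃o ℝ)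

noncomputable def gPerm : Equiv.Perm ℝ := g.toEquiv

lemma gPerm_apply (x : ℝ) : gPerm g x = g x := rfl

lemma gPerm_zpow_mul_apply (m n : ℤ) (x : ℝ) :
    (gPerm g ^ m) ((gPerm g ^ n) x) = (gPerm g ^ (m + n)) x := by
  rw [← Equiv.Perm.mul_apply, ← zpow_add]

lemma gPerm_zpow_strictMono : ∀ n : ℤ, StrictMono ⇑(gPerm g ^ n) := by
  intro n
  induction n using Int.induction_on with
  | zero => simpa using strictMono_id
  | succ k ih =>
      have h : ⇑(gPerm g ^ ((k : ℤ) + 1)) = ⇑(gPerm g ^ (k : ℤ)) ∘ ⇑(gPerm g) := by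
        rw [zpow_add_one]; rfl
      rw [h]; exact ih.comp g.strictMono
  | pred k ih =>
      have h : ⇑(gPerm g ^ (-(k : ℤ) - 1)) = ⇑(gPerm g ^ (-(k : ℤ))) ∘ ⇑(gPerm g)⁻¹ := by
        rw [zpow_sub_one]; rfl
      have hsymm : ⇑(gPerm g)⁻¹ = ⇑g.symm := rfl
      rw [h, hsymm]; exact ih.comp g.symm.strictMono
end

section
variable (g : ℝ ≃o ℝ) (hgy : ∀ y, y < g y)
include hgy

noncomputable def orb (n : ℤ) : ℝ := (gPerm g ^ n) 0

omit hgy in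
lemma orb_succ (n : ℤ) : orb g (n + 1) = g (orb g n) := by
  rw [orb, orb, add_comm, zpow_add, Equiv.Perm.mul_apply]; rfl

omit hgy in
lemma orb_pred (n : ℤ) : orb g (n - 1) = g.symm (orb g n) := by
  rw [orb, orb, sub_eq_neg_add, zpow_add, Equiv.Perm.mul_apply]; rfl

lemma orb_strictMono : StrictMono (orb g) := by
  exact strictMono_int_of_lt_succ fun n => by rw [orb_succ]; exact hgy _

omit hgy in
lemma orb_nat (k : ℕ) : orb g (k : ℤ) = (⇑g)^[k] 0 := by
  induction k with
  | zero => simp [orb]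
  | succ k ih => push_cast; rw [orb_succ, ih, Function.iterate_succ_apply']

omit hgy in
lemma orb_neg_nat (k : ℕ) : orb g (-(k : ℤ)) = (⇑g.symm)^[k] 0 := by
  induction k with
  | zero => simp [orb]
  | succ k ih =>
      have : -((k : ℤ) + 1) = -(k : ℤ) - 1 := by ring
      push_cast
      rw [this, orb_pred, ih, Function.iterate_succ_apply']

lemma orb_unbounded_above (y : ℝ) : ∃ n : ℤ, y < orb g n := by
  obtain ⟨k, hk⟩ := escape_up g g.continuous hgy 0 y
  exact ⟨k, by rwa [orb_nat]⟩

lemma orb_unbounded_below (y : ℝ) : ∃ n : ℤ, orb g n < y := by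
  have hlt : ∀ z, g.symm z < z := fun z => by
    have := hgy (g.symm z); rwa [g.apply_symm_apply] at this
  obtain ⟨k, hk⟩ := escape_down g.symm g.symm.continuous hlt 0 y
  exact ⟨-(k : ℤ), by rwa [orb_neg_nat]⟩

lemma orb_exists_greatest (y : ℝ) :
    ∃ n : ℤ, orb g n ≤ y ∧ ∀ z : ℤ, orb g z ≤ y → z ≤ n := by
  obtain ⟨m, hm⟩ := orb_unbounded_above g hgy y
  obtain ⟨l, hl⟩ := orb_unbounded_below g hgy y
  exact Int.exists_greatest_of_bdd
    ⟨m, fun z hz => ((orb_strictMono g hgy).lt_iff_lt.mp (lt_of_le_of_lt hz hm)).le⟩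
    ⟨l, hl.le⟩

end

section
variable (g : ℝ ≃o ℝ) (hgy : ∀ y, y < g y)
include hgy

noncomputable def Nfl (y : ℝ) : ℤ := (orb_exists_greatest g hgy y).choose

lemma Nfl_le (y : ℝ) : orb g (Nfl g hgy y) ≤ y :=
  (orb_exists_greatest g hgy y).choose_spec.1

lemma Nfl_max (y : ℝ) : ∀ z : ℤ, orb g z ≤ y → z ≤ Nfl g hgy y :=
  (orb_exists_greatest g hgy y).choose_spec.2

lemma Nfl_lt (y : ℝ) : y < orb g (Nfl g hgy y + 1) := by
  by_contra h
  push_neg at h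
  exact absurd (Nfl_max g hgy y _ h) (by omega)

lemma Nfl_uniq {y : ℝ} {n : ℤ} (h1 : orb g n ≤ y) (h2 : y < orb g (n + 1)) :
    Nfl g hgy y = n := by
  have ha : n ≤ Nfl g hgy y := Nfl_max g hgy y n h1
  have hb : Nfl g hgy y < n + 1 := by
    have := lt_of_le_of_lt (Nfl_le g hgy y) h2
    exact (orb_strictMono g hgy).lt_iff_lt.mp this
  omega

noncomputable def rrm (y : ℝ) : ℝ :=
  (Nfl g hgy y : ℝ) + (gPerm g ^ (-(Nfl g hgy y))) y / orb g 1

omit hgy in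
lemma orb_zero : orb g 0 = 0 := by simp [orb]

lemma orb_one_pos : 0 < orb g 1 := by
  have := (orb_strictMono g hgy) (show (0:ℤ) < 1 by norm_num)
  rwa [orb_zero] at this

omit hgy in
lemma gPerm_zpow_orb (m n : ℤ) : (gPerm g ^ m) (orb g n) = orb g (m + n) :=
  gPerm_zpow_mul_apply g m n 0

lemma frac_nonneg (y : ℝ) : 0 ≤ (gPerm g ^ (-(Nfl g hgy y))) y := by
  have := (gPerm_zpow_strictMono g (-(Nfl g hgy y))).monotone (Nfl_le g hgy y)
  rwa [gPerm_zpow_orb, neg_add_cancel, orb_zero] at this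

lemma frac_lt (y : ℝ) : (gPerm g ^ (-(Nfl g hgy y))) y < orb g 1 := by
  have := (gPerm_zpow_strictMono g (-(Nfl g hgy y))) (Nfl_lt g hgy y)
  rwa [gPerm_zpow_orb, neg_add_cancel_left] at this

lemma rrm_strictMono : StrictMono (rrm g hgy) := by
  intro y z hyz
  have hle : Nfl g hgy y ≤ Nfl g hgy z :=
    Nfl_max g hgy z _ (le_trans (Nfl_le g hgy y) hyz.le)
  rcases eq_or_lt_of_le hle with heq | hlt
  · unfold rrm
    rw [← heq]
    have h1 := (gPerm_zpow_strictMono g (-(Nfl g hgy y))) hyz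
    have := orb_one_pos g hgy
    gcongr
  · unfold rrm
    have h1 : (gPerm g ^ (-(Nfl g hgy y))) y / orb g 1 < 1 :=
      (div_lt_one (orb_one_pos g hgy)).mpr (frac_lt g hgy y)
    have h2 : 0 ≤ (gPerm g ^ (-(Nfl g hgy z))) z / orb g 1 :=
      div_nonneg (frac_nonneg g hgy z) (orb_one_pos g hgy).le
    have h3 : (Nfl g hgy y : ℝ) + 1 ≤ (Nfl g hgy z : ℝ) := by exact_mod_cast hlt
    linarith

lemma rrm_surjective : Function.Surjective (rrm g hgy) := by
  intro t
  set n : ℤ := ⌊t⌋ with hn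
  set s : ℝ := (t - n) * orb g 1 with hs
  have hs0 : 0 ≤ s := mul_nonneg (sub_nonneg.2 (Int.floor_le t)) (orb_one_pos g hgy).le
  have hs1 : s < orb g 1 := by
    have h1 : t - n < 1 := by
      have := Int.lt_floor_add_one t; linarith
    calc s < 1 * orb g 1 := by
            exact mul_lt_mul_of_pos_right h1 (orb_one_pos g hgy)
      _ = orb g 1 := one_mul _
  refine ⟨(gPerm g ^ n) s, ?_⟩
  have hcn : orb g n ≤ (gPerm g ^ n) s := by
    have := (gPerm_zpow_strictMono g n).monotone hs0
    rwa [show (gPerm g ^ n) 0 = orb g n from rfl] at this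
  have hcn1 : (gPerm g ^ n) s < orb g (n + 1) := by
    have := (gPerm_zpow_strictMono g n) hs1
    rwa [gPerm_zpow_orb] at this
  have hN : Nfl g hgy ((gPerm g ^ n) s) = n := Nfl_uniq g hgy hcn hcn1
  unfold rrm
  rw [hN, gPerm_zpow_mul_apply, neg_add_cancel, zpow_zero, Equiv.Perm.coe_one, id_eq,
    hs, mul_div_assoc, div_self (orb_one_pos g hgy).ne', mul_one]
  ring

lemma rrm_g (y : ℝ) : rrm g hgy (g y) = rrm g hgy y + 1 := by
  have hN : Nfl g hgy (g y) = Nfl g hgy y + 1 := by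
    refine Nfl_uniq g hgy ?_ ?_
    · rw [orb_succ]; exact g.monotone (Nfl_le g hgy y)
    · rw [orb_succ]; exact g.strictMono (Nfl_lt g hgy y)
  have hfrac : (gPerm g ^ (-(Nfl g hgy y + 1))) (g y)
      = (gPerm g ^ (-(Nfl g hgy y))) y := by
    have h1 : g y = (gPerm g ^ (1:ℤ)) y := by rw [zpow_one]; rfl
    rw [h1, gPerm_zpow_mul_apply,
      show -(Nfl g hgy y + 1) + 1 = -(Nfl g hgy y) by ring]
  unfold rrm
  rw [hN, hfrac]
  push_cast
  ring

end

/-- Key step in equivalence of 2-worldline 2IRs: any pair of continuous strictly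
increasing bijections F > P of ℝ can be reparameterised to constant separation 2a. -/
theorem stmt_2 (F P : ℝ → ℝ)
    (hFc : Continuous F) (hFm : StrictMono F) (hFb : Function.Bijective F)
    (hPc : Continuous P) (hPm : StrictMono P) (hPb : Function.Bijective P)
    (hFP : ∀ x, F x > P x) :
    ∃ (r : ℝ → ℝ) (a : ℝ), 0 < a ∧ Continuous r ∧ StrictMono r ∧
      Function.Bijective r ∧ ∀ x, r (F x) - r (P x) = 2 * a := by
  set eF : ℝ ≃o ℝ := StrictMono.orderIsoOfSurjective F hFm hFb.2 with heF
  set eP : ℝ ≃o ℝ := StrictMono.orderIsoOfSurjective P hPm hPb.2 with heP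
  have heFa : ∀ x, eF x = F x := fun x => rfl
  have hePa : ∀ x, eP x = P x := fun x => rfl
  set g : ℝ ≃o ℝ := eP.symm.trans eF with hg
  have hga : ∀ y, g y = F (eP.symm y) := fun y => rfl
  have hgy : ∀ y, y < g y := by
    intro y
    have h1 := hFP (eP.symm y)
    have h2 : P (eP.symm y) = y := by
      rw [← hePa]; exact eP.apply_symm_apply y
    rw [hga]; linarith
  have hgF : ∀ x, g (P x) = F x := by
    intro x
    rw [hga]
    congr 1
    rw [← hePa]; exact eP.symm_apply_apply x
  refine ⟨rrm g hgy, 1/2, by norm_num, ?_, rrm_strictMono g hgy,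
    ⟨(rrm_strictMono g hgy).injective, rrm_surjective g hgy⟩, ?_⟩
  · exact Monotone.continuous_of_surjective (rrm_strictMono g hgy).monotone
      (rrm_surjective g hgy)
  · intro x
    rw [← hgF x, rrm_g g hgy (P x)]
    ring
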